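/- Suppose v ≠ 0 and vᵀA₀v > 0. Then lim_{t→0⁺} (L(‖v‖ − t) − c) / t² = −d₁‖v‖² / ((σ² + d₁) vᵀA₀v) < 0, while L(γ) = c for all γ ≥ ‖v‖ (so the corresponding right-sided limit is 0). Hence the second derivative of L is discontinuous at γ = ‖v‖: the depth-1 model has a second-order phase transition at γ = ‖v‖. -/

import Mathlib

open Matrix

/-- The depth-1 effective loss
ℓ̄(b, γ) = −d₁ b² vᵀ (b²(σ²+d₁)A₀ + γI)⁻¹ v + c + γ d₁ b². -/
noncomputable def effLoss1 {n : ℕ} (A₀ : Matrix (Fin n) (Fin n) ℝ) (v : Fin n → ℝ)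
    (c : ℝ) (d₁ : ℕ) (σ : ℝ) (b γ : ℝ) : ℝ :=
  -(d₁ : ℝ) * b ^ 2 *
      (v ⬝ᵥ (((b ^ 2 * (σ ^ 2 + (d₁ : ℝ))) • A₀ + γ • (1 : Matrix (Fin n) (Fin n) ℝ))⁻¹.mulVec v))
    + c + γ * (d₁ : ℝ) * b ^ 2

section Aux
variable {n : ℕ}

private lemma smul_psd {A : Matrix (Fin n) (Fin n) ℝ} (hA : A.PosSemidef) {s : ℝ} (hs : 0 ≤ s) :
    (s • A).PosSemidef := by
  refine .of_dotProduct_mulVec_nonneg ?_ (fun x => ?_)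
  · unfold Matrix.IsHermitian
    rw [conjTranspose_smul, hA.1]; simp
  · rw [smul_mulVec, dotProduct_smul, smul_eq_mul]
    exact mul_nonneg hs (hA.dotProduct_mulVec_nonneg x)

private lemma smul_one_posDef {γ : ℝ} (hγ : 0 < γ) :
    (γ • (1 : Matrix (Fin n) (Fin n) ℝ)).PosDef := by
  refine .of_dotProduct_mulVec_pos ?_ (fun x hx => ?_)
  · unfold Matrix.IsHermitian
    rw [conjTranspose_smul, conjTranspose_one]; simp
  · rw [smul_mulVec, dotProduct_smul, smul_eq_mul, one_mulVec]
    exact mul_pos hγ (by simpa using dotProduct_star_self_pos_iff.mpr hx)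

private lemma M_posDef {A : Matrix (Fin n) (Fin n) ℝ} (hA : A.PosSemidef) {s γ : ℝ}
    (hs : 0 ≤ s) (hγ : 0 < γ) :
    (s • A + γ • (1 : Matrix (Fin n) (Fin n) ℝ)).PosDef :=
  Matrix.PosDef.posSemidef_add (smul_psd hA hs) (smul_one_posDef hγ)

private lemma qf_inv_nonneg {M : Matrix (Fin n) (Fin n) ℝ} (hM : M.PosDef) (x : Fin n → ℝ) :
    0 ≤ x ⬝ᵥ M⁻¹ *ᵥ x := by
  simpa [star_trivial] using hM.inv.posSemidef.dotProduct_mulVec_nonneg x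

private lemma qf_inv_le {M : Matrix (Fin n) (Fin n) ℝ} (hM : M.PosDef) {γ : ℝ} (hγ : 0 < γ)
    (hMγ : (M - γ • (1 : Matrix (Fin n) (Fin n) ℝ)).PosSemidef) (x : Fin n → ℝ) :
    x ⬝ᵥ M⁻¹ *ᵥ x ≤ (x ⬝ᵥ x) / γ := by
  set w := M⁻¹ *ᵥ x with hw
  have hMx : M *ᵥ w = x := by
    rw [hw, mulVec_mulVec, Matrix.mul_nonsing_inv _ ((Matrix.isUnit_iff_isUnit_det M).mp hM.isUnit),
      one_mulVec]
  have h1 : γ * (w ⬝ᵥ w) ≤ x ⬝ᵥ w := by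
    have := hMγ.dotProduct_mulVec_nonneg w
    rw [star_trivial, sub_mulVec, dotProduct_sub, smul_mulVec, one_mulVec,
      dotProduct_smul, smul_eq_mul, sub_nonneg, hMx] at this
    calc γ * (w ⬝ᵥ w) ≤ w ⬝ᵥ x := this
    _ = x ⬝ᵥ w := dotProduct_comm w x
  have h2 : (x ⬝ᵥ w) ^ 2 ≤ (x ⬝ᵥ x) * (w ⬝ᵥ w) := by
    have := Finset.sum_mul_sq_le_sq_mul_sq Finset.univ x w
    simpa [dotProduct, sq] using this
  have hww : 0 ≤ w ⬝ᵥ w := by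
    simpa [dotProduct] using Finset.sum_nonneg fun i _ => mul_self_nonneg (w i)
  have hxx : 0 ≤ x ⬝ᵥ x := by
    simpa [dotProduct] using Finset.sum_nonneg fun i _ => mul_self_nonneg (x i)
  rw [le_div_iff₀ hγ]
  rcases eq_or_lt_of_le (le_trans (mul_nonneg hγ.le hww) h1) with h0 | h0
  · rw [← h0]; simpa using hxx
  · have hwwpos : 0 < w ⬝ᵥ w := by nlinarith
    nlinarith [mul_le_mul_of_nonneg_right h1 h0.le, h2, hwwpos]

private lemma qf_expand {A : Matrix (Fin n) (Fin n) ℝ} (hA : A.PosSemidef) {s γ : ℝ}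
    (hs : 0 ≤ s) (hγ : 0 < γ) (v : Fin n → ℝ) :
    v ⬝ᵥ (s • A + γ • (1 : Matrix (Fin n) (Fin n) ℝ))⁻¹ *ᵥ v
      = (v ⬝ᵥ v) / γ - s * (v ⬝ᵥ A *ᵥ v) / γ ^ 2
        + s ^ 2 / γ ^ 2 *
          ((A *ᵥ v) ⬝ᵥ (s • A + γ • (1 : Matrix (Fin n) (Fin n) ℝ))⁻¹ *ᵥ (A *ᵥ v)) := by
  set M := s • A + γ • (1 : Matrix (Fin n) (Fin n) ℝ) with hMdef
  have hMpd := M_posDef hA hs hγ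
  have hMinv : M * M⁻¹ = 1 :=
    Matrix.mul_nonsing_inv _ ((Matrix.isUnit_iff_isUnit_det M).mp hMpd.isUnit)
  have hMA : M * A = A * M := by
    rw [hMdef, Matrix.add_mul, Matrix.mul_add, Matrix.smul_mul, Matrix.mul_smul,
      Matrix.smul_mul, Matrix.mul_smul, Matrix.one_mul, Matrix.mul_one]
  have key : M * (A * M⁻¹ * A) = A * A := by
    calc M * (A * M⁻¹ * A) = (M * A) * M⁻¹ * A := by rw [← Matrix.mul_assoc, ← Matrix.mul_assoc]
    _ = (A * M) * M⁻¹ * A := by rw [hMA]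
    _ = A * (M * M⁻¹) * A := by rw [Matrix.mul_assoc A M]
    _ = A * A := by rw [hMinv, Matrix.mul_one]
  have hB : M⁻¹ = γ⁻¹ • (1 : Matrix (Fin n) (Fin n) ℝ) - (s / γ ^ 2) • A
      + (s ^ 2 / γ ^ 2) • (A * M⁻¹ * A) := by
    refine Matrix.inv_eq_right_inv ?_
    rw [Matrix.mul_add, Matrix.mul_sub, Matrix.mul_smul, Matrix.mul_smul, Matrix.mul_smul,
      Matrix.mul_one, key]
    rw [hMdef, Matrix.add_mul, Matrix.smul_mul, Matrix.smul_mul, Matrix.one_mul]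
    have hγ' : γ ≠ 0 := hγ.ne'
    match_scalars <;> (field_simp; try ring)
  have hAt : Aᵀ = A := by
    rw [← Matrix.conjTranspose_eq_transpose_of_trivial]; exact hA.1
  have hsym : ∀ y : Fin n → ℝ, v ⬝ᵥ A *ᵥ y = (A *ᵥ v) ⬝ᵥ y := by
    intro y
    rw [dotProduct_mulVec, ← Matrix.mulVec_transpose, hAt]
  have hAM : (A * M⁻¹ * A) *ᵥ v = A *ᵥ (M⁻¹ *ᵥ (A *ᵥ v)) := by
    rw [mulVec_mulVec, mulVec_mulVec]
  conv_lhs => rw [hB]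
  rw [add_mulVec, sub_mulVec, smul_mulVec, smul_mulVec, smul_mulVec,
    one_mulVec, dotProduct_add, dotProduct_sub, dotProduct_smul, dotProduct_smul,
    dotProduct_smul, hAM]
  simp only [hsym, smul_eq_mul]
  ring

private lemma qf_inv_mono {M M' : Matrix (Fin n) (Fin n) ℝ} (hM : M.PosDef) (hM' : M'.PosDef)
    (hdiff : (M' - M).PosSemidef) (x : Fin n → ℝ) :
    x ⬝ᵥ M'⁻¹ *ᵥ x ≤ x ⬝ᵥ M⁻¹ *ᵥ x := by
  set w := M'⁻¹ *ᵥ x with hwdef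
  set u := M⁻¹ *ᵥ x with hudef
  have hw : M' *ᵥ w = x := by
    rw [hwdef, mulVec_mulVec,
      Matrix.mul_nonsing_inv _ ((Matrix.isUnit_iff_isUnit_det M').mp hM'.isUnit), one_mulVec]
  have hu : M *ᵥ u = x := by
    rw [hudef, mulVec_mulVec,
      Matrix.mul_nonsing_inv _ ((Matrix.isUnit_iff_isUnit_det M).mp hM.isUnit), one_mulVec]
  have hMt : Mᵀ = M := by
    rw [← Matrix.conjTranspose_eq_transpose_of_trivial]; exact hM.1
  have hMsym : ∀ y z : Fin n → ℝ, y ⬝ᵥ M *ᵥ z = (M *ᵥ y) ⬝ᵥ z := by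
    intro y z
    rw [dotProduct_mulVec, ← Matrix.mulVec_transpose, hMt]
  have h0 : 0 ≤ (w - u) ⬝ᵥ M *ᵥ (w - u) := by
    simpa [star_trivial] using hM.posSemidef.dotProduct_mulVec_nonneg (w - u)
  have hcmp : w ⬝ᵥ M *ᵥ w ≤ w ⬝ᵥ M' *ᵥ w := by
    have := hdiff.dotProduct_mulVec_nonneg w
    rw [star_trivial, sub_mulVec, dotProduct_sub, sub_nonneg] at this
    exact this
  have e1 : w ⬝ᵥ M' *ᵥ w = x ⬝ᵥ w := by rw [hw]; exact dotProduct_comm w x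
  have e2 : u ⬝ᵥ M *ᵥ w = x ⬝ᵥ w := by rw [hMsym, hu]
  have e3 : w ⬝ᵥ M *ᵥ u = w ⬝ᵥ x := by rw [hu]
  have e4 : u ⬝ᵥ M *ᵥ u = x ⬝ᵥ u := by rw [hMsym, hu]
  rw [mulVec_sub, dotProduct_sub, sub_dotProduct, sub_dotProduct] at h0
  rw [e2, e3, e4] at h0
  have e5 : w ⬝ᵥ x = x ⬝ᵥ w := dotProduct_comm w x
  -- goal : x ⬝ᵥ w ≤ x ⬝ᵥ u
  linarith [hcmp, e1, h0, e5]

private lemma dp_self_nonneg (x : Fin n → ℝ) : 0 ≤ x ⬝ᵥ x := by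
  simpa [dotProduct] using Finset.sum_nonneg fun i (_ : i ∈ Finset.univ) => mul_self_nonneg (x i)

private lemma qf_R_le {A : Matrix (Fin n) (Fin n) ℝ} (hA : A.PosSemidef) {s γ : ℝ}
    (hs : 0 ≤ s) (hγ : 0 < γ) (x : Fin n → ℝ) :
    γ * (x ⬝ᵥ (s • A + γ • (1 : Matrix (Fin n) (Fin n) ℝ))⁻¹ *ᵥ x) ≤ x ⬝ᵥ x := by
  have hMpd := M_posDef hA hs hγ
  have := qf_inv_le hMpd hγ (by rw [add_sub_cancel_right]; exact smul_psd hA hs) x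
  rw [le_div_iff₀ hγ] at this
  linarith

private lemma qf_decomp {A : Matrix (Fin n) (Fin n) ℝ} (hA : A.PosSemidef) (v : Fin n → ℝ)
    {s γ : ℝ} (hs : 0 ≤ s) (hγ : 0 < γ) :
    ∃ R : ℝ, 0 ≤ R ∧ γ * R ≤ (A *ᵥ v) ⬝ᵥ (A *ᵥ v) ∧
      γ ^ 2 * (v ⬝ᵥ (s • A + γ • (1 : Matrix (Fin n) (Fin n) ℝ))⁻¹ *ᵥ v)
        = γ * (v ⬝ᵥ v) - s * (v ⬝ᵥ A *ᵥ v) + s ^ 2 * R := by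
  refine ⟨(A *ᵥ v) ⬝ᵥ (s • A + γ • (1 : Matrix (Fin n) (Fin n) ℝ))⁻¹ *ᵥ (A *ᵥ v),
    qf_inv_nonneg (M_posDef hA hs hγ) _, qf_R_le hA hs hγ _, ?_⟩
  rw [qf_expand hA hs hγ v]
  generalize (A *ᵥ v) ⬝ᵥ (s • A + γ • (1 : Matrix (Fin n) (Fin n) ℝ))⁻¹ *ᵥ (A *ᵥ v) = R
  field_simp

private lemma effLoss_eq {A : Matrix (Fin n) (Fin n) ℝ} (v : Fin n → ℝ)
    (c : ℝ) (d₁ : ℕ) (σ : ℝ) (b γ : ℝ) (hτ : (0:ℝ) < σ ^ 2 + (d₁ : ℝ)) :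
    effLoss1 A v c d₁ σ b γ
      = c + ((d₁ : ℝ) / (σ ^ 2 + (d₁ : ℝ))) * ((b ^ 2 * (σ ^ 2 + (d₁ : ℝ))) *
          (γ - v ⬝ᵥ ((b ^ 2 * (σ ^ 2 + (d₁ : ℝ))) • A
            + γ • (1 : Matrix (Fin n) (Fin n) ℝ))⁻¹ *ᵥ v)) := by
  unfold effLoss1
  generalize (v ⬝ᵥ ((b ^ 2 * (σ ^ 2 + (d₁ : ℝ))) • A
      + γ • (1 : Matrix (Fin n) (Fin n) ℝ))⁻¹ *ᵥ v) = F
  field_simp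
  ring

private lemma scalar_lower {V a W γ u s F R Fu Ru : ℝ}
    (hγ : 0 < γ) (hu : 0 < u) (hs : 0 ≤ s)
    (hE : 0 < γ * a - u * W) (hreg : γ ^ 2 * V - u * γ * a + u ^ 2 * W ≤ γ ^ 4)
    (hW0 : 0 ≤ W)
    (hFx : γ ^ 2 * F = γ * V - s * a + s ^ 2 * R) (hR0 : 0 ≤ R) (hRW : γ * R ≤ W)
    (hFu2 : γ ^ 2 * Fu = γ * V - u * a + u ^ 2 * Ru) (hRu0 : 0 ≤ Ru) (hRuW : γ * Ru ≤ W)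
    (hmono : u ≤ s → F ≤ Fu) :
    -(γ * (V - γ ^ 2) ^ 2 / (4 * (γ * a - u * W))) ≤ s * (γ - F) := by
  rcases le_or_gt s u with hsu | hus
  · have hFX : γ ^ 3 * (s * (γ - F)) = s * γ ^ 4 - s * γ ^ 2 * V + s ^ 2 * γ * a
        - s ^ 3 * γ * R := by linear_combination (-(s * γ)) * hFx
    have h3 : s ^ 3 * γ * R ≤ s ^ 2 * u * W := by
      nlinarith [mul_le_mul_of_nonneg_left hRW (by positivity : (0:ℝ) ≤ s ^ 3),
        mul_nonneg (mul_nonneg (sub_nonneg.2 hsu) (sq_nonneg s)) hW0]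
    have h5 : (-(γ ^ 2 * (V - γ ^ 2))) * s + (γ * a - u * W) * s ^ 2
        ≤ γ ^ 3 * (s * (γ - F)) := by nlinarith [hFX, h3]
    have h1 : -(γ ^ 4 * (V - γ ^ 2) ^ 2)
        ≤ ((-(γ ^ 2 * (V - γ ^ 2))) * s + (γ * a - u * W) * s ^ 2)
          * (4 * (γ * a - u * W)) := by
      nlinarith [sq_nonneg (2 * (γ * a - u * W) * s - γ ^ 2 * (V - γ ^ 2))]
    have h6 := mul_le_mul_of_nonneg_right h5 (by linarith : (0:ℝ) ≤ 4 * (γ * a - u * W))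
    have h4 := le_trans h1 h6
    have hB : (0:ℝ) < 4 * (γ * a - u * W) := by linarith
    rw [show -(γ * (V - γ ^ 2) ^ 2 / (4 * (γ * a - u * W)))
        = (-(γ * (V - γ ^ 2) ^ 2)) / (4 * (γ * a - u * W)) from by ring,
      div_le_iff₀ hB]
    nlinarith [h4, pow_pos hγ 3]
  · have hmono' := hmono hus.le
    have h8 : γ ^ 3 * Fu = γ ^ 2 * V - u * γ * a + u ^ 2 * (γ * Ru) := by
      linear_combination γ * hFu2
    have h7 : γ ^ 3 * Fu ≤ γ ^ 4 := by
      nlinarith [h8, hreg, mul_le_mul_of_nonneg_left hRuW (sq_nonneg u)]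
    have hFγ : F ≤ γ := by nlinarith [hmono', h7, pow_pos hγ 3]
    have hpos : 0 ≤ s * (γ - F) := mul_nonneg hs (by linarith)
    have hconst := div_nonneg (show (0:ℝ) ≤ γ * (V - γ ^ 2) ^ 2 by positivity)
      (show (0:ℝ) ≤ 4 * (γ * a - u * W) by linarith)
    linarith

private lemma effLoss_lower {A : Matrix (Fin n) (Fin n) ℝ} (hA : A.PosSemidef)
    (v : Fin n → ℝ) (c : ℝ) (d₁ : ℕ) (hd₁ : 0 < d₁) (σ : ℝ) {γ u : ℝ}
    (hγ : 0 < γ) (hu : 0 < u)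
    (hE : 0 < γ * (v ⬝ᵥ A *ᵥ v) - u * ((A *ᵥ v) ⬝ᵥ (A *ᵥ v)))
    (hreg : γ ^ 2 * (v ⬝ᵥ v) - u * γ * (v ⬝ᵥ A *ᵥ v) + u ^ 2 * ((A *ᵥ v) ⬝ᵥ (A *ᵥ v)) ≤ γ ^ 4)
    (b : ℝ) :
    c - ((d₁ : ℝ) / (σ ^ 2 + (d₁ : ℝ))) *
        (γ * ((v ⬝ᵥ v) - γ ^ 2) ^ 2 /
          (4 * (γ * (v ⬝ᵥ A *ᵥ v) - u * ((A *ᵥ v) ⬝ᵥ (A *ᵥ v)))))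
      ≤ effLoss1 A v c d₁ σ b γ := by
  have hd₁' : (1:ℝ) ≤ (d₁:ℝ) := by exact_mod_cast hd₁
  have hτ : (0:ℝ) < σ ^ 2 + (d₁ : ℝ) := by nlinarith [sq_nonneg σ]
  have hs : (0:ℝ) ≤ b ^ 2 * (σ ^ 2 + (d₁ : ℝ)) := by positivity
  obtain ⟨R, hR0, hRW, hFx⟩ := qf_decomp hA v hs hγ
  obtain ⟨Ru, hRu0, hRuW, hFu⟩ := qf_decomp hA v hu.le hγ
  have hmono : u ≤ b ^ 2 * (σ ^ 2 + (d₁ : ℝ)) →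
      (v ⬝ᵥ ((b ^ 2 * (σ ^ 2 + (d₁ : ℝ))) • A + γ • (1 : Matrix (Fin n) (Fin n) ℝ))⁻¹ *ᵥ v)
        ≤ (v ⬝ᵥ (u • A + γ • (1 : Matrix (Fin n) (Fin n) ℝ))⁻¹ *ᵥ v) := by
    intro h
    apply qf_inv_mono (M_posDef hA hu.le hγ) (M_posDef hA hs hγ) ?_ v
    have hdiff : (b ^ 2 * (σ ^ 2 + (d₁ : ℝ))) • A + γ • (1 : Matrix (Fin n) (Fin n) ℝ)
        - (u • A + γ • (1 : Matrix (Fin n) (Fin n) ℝ))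
          = (b ^ 2 * (σ ^ 2 + (d₁ : ℝ)) - u) • A := by
      match_scalars <;> ring
    rw [hdiff]
    exact smul_psd hA (by linarith)
  have hmain := scalar_lower hγ hu hs hE hreg (dp_self_nonneg _) hFx hR0 hRW hFu hRu0 hRuW hmono
  rw [effLoss_eq v c d₁ σ b γ hτ]
  have hτd : (0:ℝ) < (d₁ : ℝ) / (σ ^ 2 + (d₁ : ℝ)) := div_pos (by linarith) hτ
  nlinarith [mul_le_mul_of_nonneg_left hmain hτd.le]

private lemma effLoss_upper {A : Matrix (Fin n) (Fin n) ℝ} (hA : A.PosSemidef)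
    (v : Fin n → ℝ) (c : ℝ) (d₁ : ℕ) (hd₁ : 0 < d₁) (σ : ℝ) {γ : ℝ}
    (hγ : 0 < γ) (hP : γ ^ 2 < v ⬝ᵥ v) (ha : 0 < v ⬝ᵥ A *ᵥ v) :
    ∃ b : ℝ, effLoss1 A v c d₁ σ b γ
      ≤ c - ((d₁ : ℝ) / (σ ^ 2 + (d₁ : ℝ))) *
          (((v ⬝ᵥ v) - γ ^ 2) ^ 2 / (4 * (v ⬝ᵥ A *ᵥ v))) := by
  have hd₁' : (1:ℝ) ≤ (d₁:ℝ) := by exact_mod_cast hd₁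
  have hτ : (0:ℝ) < σ ^ 2 + (d₁ : ℝ) := by nlinarith [sq_nonneg σ]
  have hPpos : 0 < (v ⬝ᵥ v) - γ ^ 2 := by linarith
  refine ⟨Real.sqrt (((v ⬝ᵥ v) - γ ^ 2) * γ / (2 * (v ⬝ᵥ A *ᵥ v) * (σ ^ 2 + (d₁ : ℝ)))), ?_⟩
  set b := Real.sqrt (((v ⬝ᵥ v) - γ ^ 2) * γ / (2 * (v ⬝ᵥ A *ᵥ v) * (σ ^ 2 + (d₁ : ℝ)))) with hbdef
  have hb2 : b ^ 2 = ((v ⬝ᵥ v) - γ ^ 2) * γ / (2 * (v ⬝ᵥ A *ᵥ v) * (σ ^ 2 + (d₁ : ℝ))) :=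
    Real.sq_sqrt (by positivity)
  have hs : (0:ℝ) ≤ b ^ 2 * (σ ^ 2 + (d₁ : ℝ)) := by positivity
  obtain ⟨R, hR0, hRW, hFx⟩ := qf_decomp hA v hs hγ
  have hsval : b ^ 2 * (σ ^ 2 + (d₁ : ℝ)) = ((v ⬝ᵥ v) - γ ^ 2) * γ / (2 * (v ⬝ᵥ A *ᵥ v)) := by
    rw [hb2]
    field_simp
  rw [effLoss_eq v c d₁ σ b γ hτ]
  set V := v ⬝ᵥ v
  set a := v ⬝ᵥ A *ᵥ v
  set s := b ^ 2 * (σ ^ 2 + (d₁ : ℝ)) with hsdef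
  set F := v ⬝ᵥ (s • A + γ • (1 : Matrix (Fin n) (Fin n) ℝ))⁻¹ *ᵥ v with hFdef
  have hXid : γ ^ 3 * (s * (γ - F)) = s * γ ^ 4 - s * γ ^ 2 * V + s ^ 2 * γ * a
      - s ^ 3 * γ * R := by linear_combination (-(s * γ)) * hFx
  have h2 : s * γ ^ 4 - s * γ ^ 2 * V + s ^ 2 * γ * a
      = γ ^ 3 * (-((V - γ ^ 2) ^ 2 / (4 * a))) := by
    rw [hsval]
    field_simp
    ring
  have h3 : 0 ≤ s ^ 3 * γ * R := mul_nonneg (mul_nonneg (pow_nonneg hs 3) hγ.le) hR0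
  have h4 : γ ^ 3 * (s * (γ - F)) ≤ γ ^ 3 * (-((V - γ ^ 2) ^ 2 / (4 * a))) := by linarith
  have h5 : s * (γ - F) ≤ -((V - γ ^ 2) ^ 2 / (4 * a)) :=
    le_of_mul_le_mul_left h4 (pow_pos hγ 3)
  have hτd : (0:ℝ) < (d₁ : ℝ) / (σ ^ 2 + (d₁ : ℝ)) := div_pos (by linarith) hτ
  nlinarith [mul_le_mul_of_nonneg_left h5 hτd.le]

private lemma effLoss_ge_c {A : Matrix (Fin n) (Fin n) ℝ} (hA : A.PosSemidef)
    (v : Fin n → ℝ) (c : ℝ) (d₁ : ℕ) (hd₁ : 0 < d₁) (σ : ℝ) {γ : ℝ}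
    (hγ : 0 < γ) (hV : v ⬝ᵥ v ≤ γ ^ 2) (b : ℝ) :
    c ≤ effLoss1 A v c d₁ σ b γ := by
  have hd₁' : (1:ℝ) ≤ (d₁:ℝ) := by exact_mod_cast hd₁
  have hτ : (0:ℝ) < σ ^ 2 + (d₁ : ℝ) := by nlinarith [sq_nonneg σ]
  have hs : (0:ℝ) ≤ b ^ 2 * (σ ^ 2 + (d₁ : ℝ)) := by positivity
  have hMpd := M_posDef hA hs hγ
  have hFle := qf_inv_le hMpd hγ
    (by rw [add_sub_cancel_right]; exact smul_psd hA hs) v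
  have hFγ : v ⬝ᵥ ((b ^ 2 * (σ ^ 2 + (d₁ : ℝ))) • A
      + γ • (1 : Matrix (Fin n) (Fin n) ℝ))⁻¹ *ᵥ v ≤ γ := by
    refine le_trans hFle ?_
    rw [div_le_iff₀ hγ]
    nlinarith
  rw [effLoss_eq v c d₁ σ b γ hτ]
  have hτd : (0:ℝ) ≤ (d₁ : ℝ) / (σ ^ 2 + (d₁ : ℝ)) := by positivity
  nlinarith [mul_nonneg hτd (mul_nonneg hs (sub_nonneg.2 hFγ))]

private lemma effLoss_zero (A : Matrix (Fin n) (Fin n) ℝ) (v : Fin n → ℝ)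
    (c : ℝ) (d₁ : ℕ) (σ : ℝ) (γ : ℝ) :
    effLoss1 A v c d₁ σ 0 γ = c := by
  unfold effLoss1
  norm_num


private lemma inf_eq_c {A : Matrix (Fin n) (Fin n) ℝ} (hA : A.PosSemidef)
    (v : Fin n → ℝ) (c : ℝ) (d₁ : ℕ) (hd₁ : 0 < d₁) (σ : ℝ) {γ : ℝ}
    (hγ : 0 < γ) (hV : v ⬝ᵥ v ≤ γ ^ 2) :
    (⨅ b : ℝ, effLoss1 A v c d₁ σ b γ) = c := by
  have hbdd : BddBelow (Set.range fun b => effLoss1 A v c d₁ σ b γ) :=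
    ⟨c, by rintro x ⟨b, rfl⟩; exact effLoss_ge_c hA v c d₁ hd₁ σ hγ hV b⟩
  refine le_antisymm ?_ (le_ciInf fun b => effLoss_ge_c hA v c d₁ hd₁ σ hγ hV b)
  have h := ciInf_le hbdd 0
  rwa [effLoss_zero] at h

private lemma sandwich {A : Matrix (Fin n) (Fin n) ℝ} (hA : A.PosSemidef)
    (v : Fin n → ℝ) (c : ℝ) (d₁ : ℕ) (hd₁ : 0 < d₁) (σ : ℝ)
    (ha : 0 < v ⬝ᵥ A *ᵥ v) {r t : ℝ}
    (hr2 : r ^ 2 = v ⬝ᵥ v) (hr0 : 0 < r) (ht0 : 0 < t) (ht2 : t < r/2)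
    (ht3 : Real.sqrt t * ((A *ᵥ v) ⬝ᵥ (A *ᵥ v)) < r/2 * (v ⬝ᵥ A *ᵥ v))
    (ht4 : Real.sqrt t * (2*r^3 + (A *ᵥ v) ⬝ᵥ (A *ᵥ v)) < r/2 * (v ⬝ᵥ A *ᵥ v)) :
    -((d₁:ℝ)/(σ ^ 2 + (d₁:ℝ))) * ((r-t)*(2*r-t)^2
        / (4*((r-t)*(v ⬝ᵥ A *ᵥ v) - Real.sqrt t * ((A *ᵥ v) ⬝ᵥ (A *ᵥ v)))))
      ≤ ((⨅ b : ℝ, effLoss1 A v c d₁ σ b (r - t)) - c) / t ^ 2 ∧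
    ((⨅ b : ℝ, effLoss1 A v c d₁ σ b (r - t)) - c) / t ^ 2
      ≤ -((d₁:ℝ)/(σ ^ 2 + (d₁:ℝ))) * ((2*r-t)^2/(4*(v ⬝ᵥ A *ᵥ v))) := by
  have hd₁' : (1:ℝ) ≤ (d₁:ℝ) := by exact_mod_cast hd₁
  have hτ : (0:ℝ) < σ ^ 2 + (d₁ : ℝ) := by nlinarith [sq_nonneg σ]
  have hW0 : 0 ≤ (A *ᵥ v) ⬝ᵥ (A *ᵥ v) := dp_self_nonneg _
  have hγ : 0 < r - t := by linarith
  have hγr2 : r/2 < r - t := by linarith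
  have hu0 : 0 < Real.sqrt t := Real.sqrt_pos.mpr ht0
  have hu2 : Real.sqrt t ^ 2 = t := Real.sq_sqrt ht0.le
  have ht2pos : (0:ℝ) < t ^ 2 := by positivity
  have hgap : (v ⬝ᵥ v) - (r - t) ^ 2 = t * (2*r - t) := by linear_combination -hr2
  have hE : 0 < (r - t) * (v ⬝ᵥ A *ᵥ v) - Real.sqrt t * ((A *ᵥ v) ⬝ᵥ (A *ᵥ v)) := by
    nlinarith [mul_lt_mul_of_pos_right hγr2 ha, ht3]
  have hreg : (r - t) ^ 2 * (v ⬝ᵥ v) - Real.sqrt t * (r - t) * (v ⬝ᵥ A *ᵥ v)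
      + Real.sqrt t ^ 2 * ((A *ᵥ v) ⬝ᵥ (A *ᵥ v)) ≤ (r - t) ^ 4 := by
    have f2 : Real.sqrt t * (Real.sqrt t * (2*r^3 + (A *ᵥ v) ⬝ᵥ (A *ᵥ v)))
        < Real.sqrt t * (r/2 * (v ⬝ᵥ A *ᵥ v)) := mul_lt_mul_of_pos_left ht4 hu0
    have f4 : (r - t) ^ 2 * (2*r - t) ≤ 2*r^3 := by
      nlinarith [ht0, ht2, hr0, sq_nonneg (r - t), sq_nonneg t]
    have f5 : t * ((r - t) ^ 2 * (2*r - t)) ≤ t * (2*r^3) :=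
      mul_le_mul_of_nonneg_left f4 ht0.le
    have f6 : Real.sqrt t * (r/2 * (v ⬝ᵥ A *ᵥ v))
        < Real.sqrt t * ((r - t) * (v ⬝ᵥ A *ᵥ v)) :=
      mul_lt_mul_of_pos_left (mul_lt_mul_of_pos_right hγr2 ha) hu0
    have hgap2 : (r - t) ^ 2 * (v ⬝ᵥ v) - (r - t) ^ 4 = (r - t) ^ 2 * (t * (2*r - t)) := by
      linear_combination (r - t) ^ 2 * hgap
    have h9 : Real.sqrt t ^ 2 * ((A *ᵥ v) ⬝ᵥ (A *ᵥ v)) = t * ((A *ᵥ v) ⬝ᵥ (A *ᵥ v)) := by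
      rw [hu2]
    have h10 : Real.sqrt t * (Real.sqrt t * (2*r^3 + (A *ᵥ v) ⬝ᵥ (A *ᵥ v)))
        = t * (2*r^3 + (A *ᵥ v) ⬝ᵥ (A *ᵥ v)) := by
      linear_combination (2*r^3 + (A *ᵥ v) ⬝ᵥ (A *ᵥ v)) * hu2
    linarith [f2, f5, f6, hgap2, h9, h10]
  have hlower := fun b => effLoss_lower hA v c d₁ hd₁ σ hγ hu0 hE hreg b
  have hbdd : BddBelow (Set.range fun b => effLoss1 A v c d₁ σ b (r - t)) :=
    ⟨_, by rintro x ⟨b, rfl⟩; exact hlower b⟩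
  have hInf_ge := le_ciInf hlower
  have hP : (r - t) ^ 2 < v ⬝ᵥ v := by nlinarith [hgap, ht0, ht2, hr0]
  obtain ⟨b₀, hb₀⟩ := effLoss_upper hA v c d₁ hd₁ σ hγ hP ha
  have hInf_le := le_trans (ciInf_le hbdd b₀) hb₀
  constructor
  · have hloeq : -((d₁:ℝ)/(σ ^ 2 + (d₁:ℝ))) * ((r-t)*(2*r-t)^2
        / (4*((r-t)*(v ⬝ᵥ A *ᵥ v) - Real.sqrt t * ((A *ᵥ v) ⬝ᵥ (A *ᵥ v)))))
        = (c - ((d₁ : ℝ) / (σ ^ 2 + (d₁ : ℝ))) *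
            ((r - t) * ((v ⬝ᵥ v) - (r - t) ^ 2) ^ 2 /
              (4 * ((r - t) * (v ⬝ᵥ A *ᵥ v)
                - Real.sqrt t * ((A *ᵥ v) ⬝ᵥ (A *ᵥ v))))) - c) / t ^ 2 := by
      rw [hgap]
      field_simp
      ring
    rw [hloeq]
    exact (div_le_div_iff_of_pos_right ht2pos).mpr (by linarith [hInf_ge])
  · have hhieq : -((d₁:ℝ)/(σ ^ 2 + (d₁:ℝ))) * ((2*r-t)^2/(4*(v ⬝ᵥ A *ᵥ v)))
        = (c - ((d₁ : ℝ) / (σ ^ 2 + (d₁ : ℝ))) *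
            (((v ⬝ᵥ v) - (r - t) ^ 2) ^ 2 / (4 * (v ⬝ᵥ A *ᵥ v))) - c) / t ^ 2 := by
      rw [hgap]
      field_simp
      ring
    rw [hhieq]
    exact (div_le_div_iff_of_pos_right ht2pos).mpr (by linarith [hInf_le])

end Aux

/-- lim_{t→0⁺} (L(‖v‖ − t) − c)/t² = −d₁‖v‖²/((σ²+d₁) vᵀA₀v) < 0, while
L(γ) = c for γ ≥ ‖v‖, so the second derivative of L is discontinuous at γ = ‖v‖:
a second-order phase transition at γ = ‖v‖. -/
theorem depth_one_second_order_transition {n : ℕ} (hn : 1 ≤ n)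
    (A₀ : Matrix (Fin n) (Fin n) ℝ) (hA : A₀.PosSemidef)
    (v : Fin n → ℝ) (hv : v ≠ 0) (hvA : 0 < v ⬝ᵥ A₀.mulVec v)
    (c : ℝ) (d₁ : ℕ) (hd₁ : 0 < d₁) (σ : ℝ) (hσ : 0 ≤ σ) :
    Filter.Tendsto
      (fun t : ℝ =>
        ((⨅ b : ℝ, effLoss1 A₀ v c d₁ σ b (Real.sqrt (v ⬝ᵥ v) - t)) - c) / t ^ 2)
      (nhdsWithin 0 (Set.Ioi 0))
      (nhds (-((d₁ : ℝ) * (v ⬝ᵥ v) / ((σ ^ 2 + (d₁ : ℝ)) * (v ⬝ᵥ A₀.mulVec v))))) ∧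
    -((d₁ : ℝ) * (v ⬝ᵥ v) / ((σ ^ 2 + (d₁ : ℝ)) * (v ⬝ᵥ A₀.mulVec v))) < 0 ∧
    ∀ γ : ℝ, Real.sqrt (v ⬝ᵥ v) ≤ γ → (⨅ b : ℝ, effLoss1 A₀ v c d₁ σ b γ) = c := by
  have hV0 : 0 < v ⬝ᵥ v := by simpa using dotProduct_star_self_pos_iff.mpr hv
  have hd₁' : (1:ℝ) ≤ (d₁:ℝ) := by exact_mod_cast hd₁
  have hτ : (0:ℝ) < σ ^ 2 + (d₁ : ℝ) := by nlinarith [sq_nonneg σ]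
  have hW0 : 0 ≤ (A₀ *ᵥ v) ⬝ᵥ (A₀ *ᵥ v) := dp_self_nonneg _
  have hr0 : 0 < Real.sqrt (v ⬝ᵥ v) := Real.sqrt_pos.mpr hV0
  have hr2 : Real.sqrt (v ⬝ᵥ v) ^ 2 = v ⬝ᵥ v := Real.sq_sqrt (le_of_lt hV0)
  have ha : 0 < v ⬝ᵥ A₀ *ᵥ v := hvA
  refine ⟨?_, ?_, ?_⟩
  · -- the limit
    have hlo_lim : Filter.Tendsto
        (fun t : ℝ => -((d₁:ℝ)/(σ ^ 2 + (d₁:ℝ)))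
          * ((Real.sqrt (v ⬝ᵥ v)-t)*(2*Real.sqrt (v ⬝ᵥ v)-t)^2
            / (4*((Real.sqrt (v ⬝ᵥ v)-t)*(v ⬝ᵥ A₀ *ᵥ v)
              - Real.sqrt t * ((A₀ *ᵥ v) ⬝ᵥ (A₀ *ᵥ v))))))
        (nhdsWithin 0 (Set.Ioi 0))
        (nhds (-((d₁ : ℝ) * (v ⬝ᵥ v) / ((σ ^ 2 + (d₁ : ℝ)) * (v ⬝ᵥ A₀.mulVec v))))) := by
      have hc : ContinuousAt
          (fun t : ℝ => -((d₁:ℝ)/(σ ^ 2 + (d₁:ℝ)))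
            * ((Real.sqrt (v ⬝ᵥ v)-t)*(2*Real.sqrt (v ⬝ᵥ v)-t)^2
              / (4*((Real.sqrt (v ⬝ᵥ v)-t)*(v ⬝ᵥ A₀ *ᵥ v)
                - Real.sqrt t * ((A₀ *ᵥ v) ⬝ᵥ (A₀ *ᵥ v)))))) 0 := by
        apply ContinuousAt.mul continuousAt_const
        apply ContinuousAt.div
        · fun_prop
        · fun_prop
        · show 4*((Real.sqrt (v ⬝ᵥ v)-0)*(v ⬝ᵥ A₀ *ᵥ v)
            - Real.sqrt 0 * ((A₀ *ᵥ v) ⬝ᵥ (A₀ *ᵥ v))) ≠ 0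
          rw [Real.sqrt_zero, zero_mul, sub_zero, sub_zero]
          positivity
      have h0 : -((d₁:ℝ)/(σ ^ 2 + (d₁:ℝ)))
          * ((Real.sqrt (v ⬝ᵥ v)-0)*(2*Real.sqrt (v ⬝ᵥ v)-0)^2
            / (4*((Real.sqrt (v ⬝ᵥ v)-0)*(v ⬝ᵥ A₀ *ᵥ v)
              - Real.sqrt 0 * ((A₀ *ᵥ v) ⬝ᵥ (A₀ *ᵥ v)))))
          = -((d₁ : ℝ) * (v ⬝ᵥ v) / ((σ ^ 2 + (d₁ : ℝ)) * (v ⬝ᵥ A₀.mulVec v))) := by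
        rw [Real.sqrt_zero, zero_mul, sub_zero, sub_zero, sub_zero]
        have hx : Real.sqrt (v ⬝ᵥ v) * (2*Real.sqrt (v ⬝ᵥ v))^2
            = 4*(v ⬝ᵥ v)*Real.sqrt (v ⬝ᵥ v) := by
          linear_combination 4 * Real.sqrt (v ⬝ᵥ v) * hr2
        rw [hx]
        field_simp
      have := hc.tendsto.mono_left (nhdsWithin_le_nhds
        (s := Set.Ioi (0:ℝ)))
      rw [h0] at this
      exact this
    have hhi_lim : Filter.Tendsto
        (fun t : ℝ => -((d₁:ℝ)/(σ ^ 2 + (d₁:ℝ)))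
          * ((2*Real.sqrt (v ⬝ᵥ v)-t)^2/(4*(v ⬝ᵥ A₀ *ᵥ v))))
        (nhdsWithin 0 (Set.Ioi 0))
        (nhds (-((d₁ : ℝ) * (v ⬝ᵥ v) / ((σ ^ 2 + (d₁ : ℝ)) * (v ⬝ᵥ A₀.mulVec v))))) := by
      have hc : ContinuousAt
          (fun t : ℝ => -((d₁:ℝ)/(σ ^ 2 + (d₁:ℝ)))
            * ((2*Real.sqrt (v ⬝ᵥ v)-t)^2/(4*(v ⬝ᵥ A₀ *ᵥ v)))) 0 := by fun_prop
      have h0 : -((d₁:ℝ)/(σ ^ 2 + (d₁:ℝ)))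
          * ((2*Real.sqrt (v ⬝ᵥ v)-0)^2/(4*(v ⬝ᵥ A₀ *ᵥ v)))
          = -((d₁ : ℝ) * (v ⬝ᵥ v) / ((σ ^ 2 + (d₁ : ℝ)) * (v ⬝ᵥ A₀.mulVec v))) := by
        have hx : (2*Real.sqrt (v ⬝ᵥ v)-0)^2 = 4*(v ⬝ᵥ v) := by
          linear_combination 4 * hr2
        rw [hx]
        field_simp
      have := hc.tendsto.mono_left (nhdsWithin_le_nhds (s := Set.Ioi (0:ℝ)))
      rw [h0] at this
      exact this
    have hsqrt0 : Filter.Tendsto (fun t : ℝ => Real.sqrt t)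
        (nhdsWithin 0 (Set.Ioi 0)) (nhds 0) := by
      have h := Real.continuous_sqrt.tendsto 0
      rw [Real.sqrt_zero] at h
      exact h.mono_left nhdsWithin_le_nhds
    have hidt : Filter.Tendsto (fun t : ℝ => t) (nhdsWithin 0 (Set.Ioi 0)) (nhds 0) :=
      (continuous_id.tendsto 0).mono_left nhdsWithin_le_nhds
    have ev1 : ∀ᶠ t in nhdsWithin (0:ℝ) (Set.Ioi 0), 0 < t :=
      Filter.eventually_of_mem self_mem_nhdsWithin (fun t ht => ht)
    have ev2 : ∀ᶠ t in nhdsWithin (0:ℝ) (Set.Ioi 0), t < Real.sqrt (v ⬝ᵥ v)/2 :=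
      hidt.eventually_lt tendsto_const_nhds (by positivity)
    have ev3 : ∀ᶠ t in nhdsWithin (0:ℝ) (Set.Ioi 0),
        Real.sqrt t * ((A₀ *ᵥ v) ⬝ᵥ (A₀ *ᵥ v))
          < Real.sqrt (v ⬝ᵥ v)/2 * (v ⬝ᵥ A₀ *ᵥ v) :=
      (hsqrt0.mul_const _).eventually_lt tendsto_const_nhds
        (by rw [zero_mul]; positivity)
    have ev4 : ∀ᶠ t in nhdsWithin (0:ℝ) (Set.Ioi 0),
        Real.sqrt t * (2*(Real.sqrt (v ⬝ᵥ v))^3 + (A₀ *ᵥ v) ⬝ᵥ (A₀ *ᵥ v))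
          < Real.sqrt (v ⬝ᵥ v)/2 * (v ⬝ᵥ A₀ *ᵥ v) :=
      (hsqrt0.mul_const _).eventually_lt tendsto_const_nhds
        (by rw [zero_mul]; positivity)
    refine tendsto_of_tendsto_of_tendsto_of_le_of_le' hlo_lim hhi_lim ?_ ?_
    · filter_upwards [ev1, ev2, ev3, ev4] with t ht0 ht2 ht3 ht4
      exact (sandwich hA v c d₁ hd₁ σ ha hr2 hr0 ht0 ht2 ht3 ht4).1
    · filter_upwards [ev1, ev2, ev3, ev4] with t ht0 ht2 ht3 ht4
      exact (sandwich hA v c d₁ hd₁ σ ha hr2 hr0 ht0 ht2 ht3 ht4).2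
  · have h : 0 < (d₁ : ℝ) * (v ⬝ᵥ v) / ((σ ^ 2 + (d₁ : ℝ)) * (v ⬝ᵥ A₀.mulVec v)) :=
      div_pos (mul_pos (by linarith) hV0) (mul_pos hτ hvA)
    linarith
  · intro γ hγ
    have hγ0 : 0 < γ := lt_of_lt_of_le hr0 hγ
    have hV : v ⬝ᵥ v ≤ γ ^ 2 := by nlinarith [hr2, hγ, hr0]
    exact inf_eq_c hA v c d₁ hd₁ σ hγ0 hV
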